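/- One-step contraction for convex stochastic optimization under generalized Lipschitz continuity: Let x ∈ ℝⁿ be fixed, γ > 0 independent of the sample, and let x⁺(ξ) = argmin_y { f_x(y,ξ) + ω(y) + (γ/2)‖y − x‖² } for ξ ∼ Ξ. Then for any optimal solution x* of min ψ, E_ξ[‖x⁺(ξ) − x*‖²] ≤ ‖x − x*‖² − (2/γ)[ψ(x) − ψ(x*)] + (𝒢(‖x‖)L_f + L_ω)²/γ². -/

import Mathlib

open MeasureTheory

private lemma norm_combo_sq {E : Type*} [NormedAddCommGroup E] [InnerProductSpace ℝ E]
    (u v : E) (t : ℝ) :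
    ‖(1 - t) • u + t • v‖ ^ 2
      = (1 - t) * ‖u‖ ^ 2 + t * ‖v‖ ^ 2 - t * (1 - t) * ‖u - v‖ ^ 2 := by
  have h1 : ‖(1 - t) • u + t • v‖ ^ 2
      = ‖(1 - t) • u‖ ^ 2 + 2 * inner ℝ ((1 - t) • u) (t • v) + ‖t • v‖ ^ 2 :=
    norm_add_sq_real _ _
  have h2 : ‖u - v‖ ^ 2 = ‖u‖ ^ 2 - 2 * inner ℝ u v + ‖v‖ ^ 2 := norm_sub_sq_real u v
  have h3 : (inner ℝ ((1 - t) • u) (t • v) : ℝ) = (1 - t) * (t * inner ℝ u v) := by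
    rw [real_inner_smul_left, real_inner_smul_right]
  have h4 : ‖(1 - t) • u‖ ^ 2 = (1 - t) ^ 2 * ‖u‖ ^ 2 := by
    rw [norm_smul, Real.norm_eq_abs, mul_pow, sq_abs]
  have h5 : ‖t • v‖ ^ 2 = t ^ 2 * ‖v‖ ^ 2 := by
    rw [norm_smul, Real.norm_eq_abs, mul_pow, sq_abs]
  rw [h1, h3, h4, h5, h2]; ring

private lemma strong_min {E : Type*} [NormedAddCommGroup E] [InnerProductSpace ℝ E]
    (g : E → ℝ) (hg : ConvexOn ℝ Set.univ g) (γ : ℝ) (hγ : 0 < γ) (x p : E)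
    (hmin : ∀ y, g p + γ / 2 * ‖p - x‖ ^ 2 ≤ g y + γ / 2 * ‖y - x‖ ^ 2) (y : E) :
    g p + γ / 2 * ‖p - x‖ ^ 2 + γ / 2 * ‖y - p‖ ^ 2
      ≤ g y + γ / 2 * ‖y - x‖ ^ 2 := by
  have key : ∀ t : ℝ, 0 < t → t ≤ 1 / 2 →
      g p + γ / 2 * ‖p - x‖ ^ 2 + γ / 2 * ‖y - p‖ ^ 2
        ≤ g y + γ / 2 * ‖y - x‖ ^ 2 + γ / 2 * t * ‖y - p‖ ^ 2 := by
    intro t ht0 ht1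
    have hconv := hg.2 (Set.mem_univ p) (Set.mem_univ y)
      (by linarith : (0:ℝ) ≤ 1 - t) ht0.le (by ring)
    have hm := hmin ((1 - t) • p + t • y)
    have hid : (1 - t) • p + t • y - x = (1 - t) • (p - x) + t • (y - x) := by
      module
    have hnorm : ‖(1 - t) • p + t • y - x‖ ^ 2
        = (1 - t) * ‖p - x‖ ^ 2 + t * ‖y - x‖ ^ 2 - t * (1 - t) * ‖y - p‖ ^ 2 := by
      rw [hid, norm_combo_sq]
      have hpy : p - x - (y - x) = -(y - p) := by abel
      rw [hpy, norm_neg]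
    rw [hnorm] at hm
    simp only [smul_eq_mul] at hconv
    have h1 : g p + γ / 2 * ‖p - x‖ ^ 2
        ≤ (1 - t) * g p + t * g y
          + γ / 2 * ((1 - t) * ‖p - x‖ ^ 2 + t * ‖y - x‖ ^ 2 - t * (1 - t) * ‖y - p‖ ^ 2) := by
      linarith [hconv]
    have h1' : t * (g p + γ / 2 * ‖p - x‖ ^ 2 + γ / 2 * (1 - t) * ‖y - p‖ ^ 2)
        ≤ t * (g y + γ / 2 * ‖y - x‖ ^ 2) := by nlinarith [h1]
    have h2 := le_of_mul_le_mul_left h1' ht0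
    nlinarith [h2]
  refine le_of_forall_pos_le_add fun ε hε => ?_
  have hC0 : (0:ℝ) < γ / 2 * ‖y - p‖ ^ 2 + 1 := by positivity
  set C : ℝ := γ / 2 * ‖y - p‖ ^ 2 + 1 with hC
  set t : ℝ := min (1 / 2) (ε / C) with htdef
  have ht0 : 0 < t := lt_min (by norm_num) (div_pos hε hC0)
  have ht1 : t ≤ 1 / 2 := min_le_left _ _
  have h := key t ht0 ht1
  have hsmall : γ / 2 * t * ‖y - p‖ ^ 2 ≤ ε := by
    have htC : t ≤ ε / C := min_le_right _ _
    have h1 : γ / 2 * t * ‖y - p‖ ^ 2 ≤ t * C := by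
      rw [hC]; nlinarith [ht0.le]
    have h2 : t * C ≤ (ε / C) * C := mul_le_mul_of_nonneg_right htC hC0.le
    have h3 : (ε / C) * C = ε := div_mul_cancel₀ _ (ne_of_gt hC0)
    linarith
  linarith

private lemma quad_lb (γ a t : ℝ) (hγ : 0 < γ) :
    -(a ^ 2 / (2 * γ)) ≤ γ / 2 * t ^ 2 - a * t := by
  have h : γ / 2 * t ^ 2 - a * t + a ^ 2 / (2 * γ) = (γ * t - a) ^ 2 / (2 * γ) := by
    field_simp; ring
  have h2 : 0 ≤ (γ * t - a) ^ 2 / (2 * γ) := by positivity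
  linarith

/-- **Lemma D.2** (one-step contraction for convex stochastic optimization under
generalized Lipschitz continuity, assumption C1).  For `γ > 0` (independent of the
sample) and `x⁺(ξ)` the minimizer of the regularized model at `x`,
`E_ξ[‖x⁺(ξ) - x*‖²] ≤ ‖x - x*‖² - (2/γ)[ψ(x) - ψ(x*)] + (𝒢(‖x‖)L_f + L_ω)²/γ²`. -/
theorem convex_one_step_generalized_lipschitz
    {n : ℕ} {S : Type*} [MeasurableSpace S] (μ : Measure S) [IsProbabilityMeasure μ]
    (f w ψ : EuclideanSpace ℝ (Fin n) → ℝ)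
    (fmod : EuclideanSpace ℝ (Fin n) → EuclideanSpace ℝ (Fin n) → S → ℝ)
    (Lfs : S → ℝ) (G : ℝ → ℝ) (γ Lf Lw : ℝ)
    -- basic parameter assumptions
    (hγ : 0 < γ) (hLf : 0 ≤ Lf) (hLw : 0 ≤ Lw)
    -- convex composite objective
    (hψdef : ∀ x, ψ x = f x + w x)
    (hf_conv : ConvexOn ℝ Set.univ f)
    (hw_conv : ConvexOn ℝ Set.univ w)
    (hw_lip : ∀ x y, |w x - w y| ≤ Lw * ‖x - y‖)
    -- properties of the stochastic model (with τ = 0)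
    (hmodel_conv : ∀ x s, ConvexOn ℝ Set.univ (fun y => fmod x y s))
    (hmodel_int : ∀ x y, Integrable (fun s => fmod x y s) μ)
    (hmodel_center : ∀ x, ∫ s, fmod x x s ∂μ = f x)
    (hmodel_under : ∀ x y, ∫ s, fmod x y s ∂μ ≤ f y)
    -- C1: generalized Lipschitz continuity with growth function 𝒢
    (hG_nonneg : ∀ t, 0 ≤ G t) (hG_mono : Monotone G) (hG_cont : Continuous G)
    (hC1 : ∀ x y z s, fmod x y s - fmod x z s ≤ Lfs s * G ‖x‖ * ‖y - z‖)
    (hLfs_nonneg : ∀ s, 0 ≤ Lfs s)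
    (hLfs_int : Integrable (fun s => Lfs s ^ 2) μ)
    (hLfs_bound : ∫ s, Lfs s ^ 2 ∂μ ≤ Lf ^ 2)
    -- an optimal solution
    (xstar : EuclideanSpace ℝ (Fin n)) (hxstar : ∀ y, ψ xstar ≤ ψ y)
    -- the current point and the stochastic one-step update
    (x : EuclideanSpace ℝ (Fin n)) (xplus : S → EuclideanSpace ℝ (Fin n))
    (hupdate : ∀ s y,
      fmod x (xplus s) s + w (xplus s) + γ / 2 * ‖xplus s - x‖ ^ 2
        ≤ fmod x y s + w y + γ / 2 * ‖y - x‖ ^ 2)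
    (hint : Integrable (fun s => ‖xplus s - xstar‖ ^ 2) μ) :
    ∫ s, ‖xplus s - xstar‖ ^ 2 ∂μ
      ≤ ‖x - xstar‖ ^ 2 - 2 / γ * (ψ x - ψ xstar)
        + (G ‖x‖ * Lf + Lw) ^ 2 / γ ^ 2 := by
  have hGx : 0 ≤ G ‖x‖ := hG_nonneg _
  -- pointwise key inequality
  have hkey : ∀ s, γ / 2 * ‖xplus s - xstar‖ ^ 2
      ≤ fmod x xstar s - fmod x x s + (Lfs s * G ‖x‖ + Lw) ^ 2 / (2 * γ)
        + (w xstar - w x + γ / 2 * ‖x - xstar‖ ^ 2) := by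
    intro s
    have hg : ConvexOn ℝ Set.univ (fun y => fmod x y s + w y) :=
      (hmodel_conv x s).add hw_conv
    have hsm := strong_min (fun y => fmod x y s + w y) hg γ hγ x (xplus s)
      (fun y => by simpa using hupdate s y) xstar
    have hlip1 : fmod x x s - fmod x (xplus s) s ≤ Lfs s * G ‖x‖ * ‖xplus s - x‖ := by
      have h := hC1 x x (xplus s) s
      rwa [norm_sub_rev] at h
    have hlip2 : w x - w (xplus s) ≤ Lw * ‖xplus s - x‖ := by
      have h := (abs_le.mp (hw_lip x (xplus s))).2
      rwa [norm_sub_rev] at h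
    have hquad := quad_lb γ (Lfs s * G ‖x‖ + Lw) ‖xplus s - x‖ hγ
    have e1 : ‖xstar - xplus s‖ = ‖xplus s - xstar‖ := norm_sub_rev _ _
    have e2 : ‖xstar - x‖ = ‖x - xstar‖ := norm_sub_rev _ _
    rw [e1, e2] at hsm
    nlinarith [hsm, hlip1, hlip2, hquad]
  -- measurability and integrability of Lfs
  have hmeasLfs : AEStronglyMeasurable Lfs μ := by
    have h1 := hLfs_int.aestronglyMeasurable
    have h2 : (fun s => Real.sqrt (Lfs s ^ 2)) = Lfs :=
      funext fun s => Real.sqrt_sq (hLfs_nonneg s)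
    rw [← h2]
    exact Real.continuous_sqrt.comp_aestronglyMeasurable h1
  have hLfs_int1 : Integrable Lfs μ := by
    have hb : Integrable (fun s => 1 + Lfs s ^ 2) μ :=
      (integrable_const (1:ℝ)).add hLfs_int
    refine hb.mono' hmeasLfs ?_
    filter_upwards with s
    have h0 := hLfs_nonneg s
    rw [Real.norm_eq_abs, abs_of_nonneg h0]
    nlinarith [sq_nonneg (Lfs s - 1)]
  set m : ℝ := ∫ s, Lfs s ∂μ with hm
  have hm0 : 0 ≤ m := integral_nonneg hLfs_nonneg
  -- E[Lfs] ≤ Lf  (Cauchy–Schwarz via variance)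
  have hmLf : m ≤ Lf := by
    have hvar : 0 ≤ ∫ s, (Lfs s - m) ^ 2 ∂μ := integral_nonneg fun s => sq_nonneg _
    have hexp : ∫ s, (Lfs s - m) ^ 2 ∂μ = (∫ s, Lfs s ^ 2 ∂μ) - m ^ 2 := by
      have hfun : (fun s => (Lfs s - m) ^ 2)
          = fun s => (Lfs s ^ 2 - 2 * m * Lfs s) + m ^ 2 := funext fun s => by ring
      have ia : Integrable (fun s => 2 * m * Lfs s) μ := hLfs_int1.const_mul (2 * m)
      have ibb : Integrable (fun s => Lfs s ^ 2 - 2 * m * Lfs s) μ := hLfs_int.sub ia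
      rw [hfun, integral_add ibb (integrable_const _), integral_sub hLfs_int ia,
          integral_const_mul, integral_const]
      simp only [measure_univ, probReal_univ, ENNReal.toReal_one, one_smul, smul_eq_mul, one_mul, ← hm]
      ring
    rw [hexp] at hvar
    nlinarith [hvar, hLfs_bound, hm0, hLf]
  -- integrability of the squared Lipschitz term
  have hsq_int : Integrable (fun s => (Lfs s * G ‖x‖ + Lw) ^ 2) μ := by
    have h1 : Integrable (fun s => (G ‖x‖) ^ 2 * Lfs s ^ 2) μ := hLfs_int.const_mul _
    have h2 : Integrable (fun s => (2 * G ‖x‖ * Lw) * Lfs s) μ := hLfs_int1.const_mul _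
    have h : Integrable (fun s => ((G ‖x‖) ^ 2 * Lfs s ^ 2 + (2 * G ‖x‖ * Lw) * Lfs s) + Lw ^ 2) μ :=
      (h1.add h2).add (integrable_const _)
    exact h.congr (Filter.Eventually.of_forall fun s => by ring)
  have hsq_eq : ∫ s, (Lfs s * G ‖x‖ + Lw) ^ 2 ∂μ
      = (G ‖x‖) ^ 2 * (∫ s, Lfs s ^ 2 ∂μ) + 2 * G ‖x‖ * Lw * m + Lw ^ 2 := by
    have hfun : (fun s => (Lfs s * G ‖x‖ + Lw) ^ 2)
        = fun s => ((G ‖x‖) ^ 2 * Lfs s ^ 2 + (2 * G ‖x‖ * Lw) * Lfs s) + Lw ^ 2 :=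
      funext fun s => by ring
    have h1 : Integrable (fun s => (G ‖x‖) ^ 2 * Lfs s ^ 2) μ := hLfs_int.const_mul _
    have h2 : Integrable (fun s => (2 * G ‖x‖ * Lw) * Lfs s) μ := hLfs_int1.const_mul _
    have h12 : Integrable (fun s => (G ‖x‖) ^ 2 * Lfs s ^ 2 + (2 * G ‖x‖ * Lw) * Lfs s) μ :=
      h1.add h2
    rw [hfun, integral_add h12 (integrable_const _), integral_add h1 h2,
        integral_const_mul, integral_const_mul, integral_const]
    simp only [measure_univ, probReal_univ, ENNReal.toReal_one, one_smul, smul_eq_mul, one_mul, ← hm]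
  have hsq_le : ∫ s, (Lfs s * G ‖x‖ + Lw) ^ 2 ∂μ ≤ (G ‖x‖ * Lf + Lw) ^ 2 := by
    rw [hsq_eq]
    nlinarith [mul_le_mul_of_nonneg_left hLfs_bound (sq_nonneg (G ‖x‖)),
      mul_le_mul_of_nonneg_left hmLf
        (mul_nonneg (mul_nonneg (by norm_num : (0:ℝ) ≤ 2) hGx) hLw),
      hm0, hGx, hLw, hLf]
  -- integrate the pointwise inequality
  have i1 : Integrable (fun s => fmod x xstar s - fmod x x s) μ :=
    (hmodel_int x xstar).sub (hmodel_int x x)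
  have i2 : Integrable (fun s => (Lfs s * G ‖x‖ + Lw) ^ 2 / (2 * γ)) μ :=
    hsq_int.div_const _
  have iB : Integrable (fun s => fmod x xstar s - fmod x x s
      + (Lfs s * G ‖x‖ + Lw) ^ 2 / (2 * γ)
      + (w xstar - w x + γ / 2 * ‖x - xstar‖ ^ 2)) μ :=
    (i1.add i2).add (integrable_const _)
  have hmono : ∫ s, γ / 2 * ‖xplus s - xstar‖ ^ 2 ∂μ
      ≤ ∫ s, (fmod x xstar s - fmod x x s + (Lfs s * G ‖x‖ + Lw) ^ 2 / (2 * γ)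
        + (w xstar - w x + γ / 2 * ‖x - xstar‖ ^ 2)) ∂μ :=
    integral_mono (hint.const_mul _) iB hkey
  have hL : ∫ s, γ / 2 * ‖xplus s - xstar‖ ^ 2 ∂μ
      = γ / 2 * ∫ s, ‖xplus s - xstar‖ ^ 2 ∂μ := integral_const_mul _ _
  have hRB : ∫ s, (fmod x xstar s - fmod x x s + (Lfs s * G ‖x‖ + Lw) ^ 2 / (2 * γ)
        + (w xstar - w x + γ / 2 * ‖x - xstar‖ ^ 2)) ∂μ
      = (∫ s, fmod x xstar s ∂μ) - f x
        + (∫ s, (Lfs s * G ‖x‖ + Lw) ^ 2 ∂μ) / (2 * γ)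
        + (w xstar - w x + γ / 2 * ‖x - xstar‖ ^ 2) := by
    have i12 : Integrable (fun s => fmod x xstar s - fmod x x s
        + (Lfs s * G ‖x‖ + Lw) ^ 2 / (2 * γ)) μ := i1.add i2
    rw [integral_add i12 (integrable_const _),
        integral_add i1 i2,
        integral_sub (hmodel_int x xstar) (hmodel_int x x),
        integral_div, integral_const, hmodel_center]
    simp only [measure_univ, probReal_univ, ENNReal.toReal_one, one_smul]
  set I : ℝ := ∫ s, ‖xplus s - xstar‖ ^ 2 ∂μ with hI
  have hdiv : (∫ s, (Lfs s * G ‖x‖ + Lw) ^ 2 ∂μ) / (2 * γ)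
      ≤ (G ‖x‖ * Lf + Lw) ^ 2 / (2 * γ) := by gcongr
  have hfinal : γ / 2 * I ≤ (f xstar + w xstar) - (f x + w x)
      + (G ‖x‖ * Lf + Lw) ^ 2 / (2 * γ) + γ / 2 * ‖x - xstar‖ ^ 2 := by
    have hund := hmodel_under x xstar
    rw [hL, hRB] at hmono
    linarith [hmono, hdiv, hund]
  have hγ' : γ ≠ 0 := ne_of_gt hγ
  have key2 : I ≤ 2 / γ * ((f xstar + w xstar) - (f x + w x)
      + (G ‖x‖ * Lf + Lw) ^ 2 / (2 * γ) + γ / 2 * ‖x - xstar‖ ^ 2) := by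
    calc I = 2 / γ * (γ / 2 * I) := by field_simp
      _ ≤ _ := mul_le_mul_of_nonneg_left hfinal (by positivity)
  have expand : 2 / γ * ((f xstar + w xstar) - (f x + w x)
      + (G ‖x‖ * Lf + Lw) ^ 2 / (2 * γ) + γ / 2 * ‖x - xstar‖ ^ 2)
      = ‖x - xstar‖ ^ 2 - 2 / γ * ((f x + w x) - (f xstar + w xstar))
        + (G ‖x‖ * Lf + Lw) ^ 2 / γ ^ 2 := by
    field_simp
    ring
  rw [expand] at key2
  rw [hψdef, hψdef]
  exact key2
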